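/- Let N = [[N₁₁, N₁₂],[N₂₁, N₂₂]] be a real symmetric positive semi-definite 2n×2n matrix split into n×n blocks. Then for any w > 0, ±(N₁₂ + N₂₁) ⪯ w N₁₁ + (1/w) N₂₂ (that is, both N₁₂+N₂₁ and −(N₁₂+N₂₁) are dominated in the Loewner order). Furthermore, if in addition N₁₁ ≻ 0, then ±(N₁₂ + N₂₁) ⪯ 2 √(𝐫(N₁₁^{-1} N₂₂)) · N₁₁, where 𝐫(·) is the spectral radius. -/

import Mathlib

open Matrix

/-- Spectral radius of a real square matrix: the largest modulus of a complex eigenvalue. -/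
noncomputable def specRad {m : Type*} [Fintype m] [DecidableEq m] (M : Matrix m m ℝ) : ℝ :=
  sSup ((fun z : ℂ => ‖z‖) '' spectrum ℂ (M.map (Complex.ofReal · : ℝ → ℂ)))

lemma real_spectrum_map {k : Type*} [Fintype k] [DecidableEq k]
    (M : Matrix k k ℝ) {μ : ℝ} (h : μ ∈ spectrum ℝ M) :
    (μ : ℂ) ∈ spectrum ℂ (M.map (Complex.ofReal · : ℝ → ℂ)) := by
  rw [spectrum.mem_iff] at h ⊢
  intro hu
  apply h
  rw [Matrix.isUnit_iff_isUnit_det] at hu ⊢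
  have hmap : (algebraMap ℂ (Matrix k k ℂ) (μ:ℂ) - M.map (Complex.ofReal · : ℝ → ℂ))
      = (algebraMap ℝ (Matrix k k ℝ) μ - M).map (algebraMap ℝ ℂ) := by
    ext i j
    simp [Matrix.algebraMap_matrix_apply, apply_ite]
  rw [hmap, ← RingHom.mapMatrix_apply, ← RingHom.map_det] at hu
  rw [isUnit_iff_ne_zero] at hu ⊢
  simpa using hu

lemma spectrum_map_conj {k : Type*} [Fintype k] [DecidableEq k]
    (P B : Matrix k k ℝ) (hP : IsUnit P.det) :
    spectrum ℂ ((P * B * P⁻¹).map (Complex.ofReal · : ℝ → ℂ)) =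
      spectrum ℂ (B.map (Complex.ofReal · : ℝ → ℂ)) := by
  let f : Matrix k k ℝ →+* Matrix k k ℂ := (algebraMap ℝ ℂ).mapMatrix
  have hf : ∀ M : Matrix k k ℝ, f M = M.map (Complex.ofReal · : ℝ → ℂ) := fun M => rfl
  have h1 : P * P⁻¹ = 1 := Matrix.mul_nonsing_inv P hP
  have h2 : P⁻¹ * P = 1 := Matrix.nonsing_inv_mul P hP
  let u : (Matrix k k ℂ)ˣ :=
    ⟨f P, f P⁻¹, by rw [← _root_.map_mul, h1, _root_.map_one],
      by rw [← _root_.map_mul, h2, _root_.map_one]⟩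
  have key : (P * B * P⁻¹).map (Complex.ofReal · : ℝ → ℂ)
      = (u : Matrix k k ℂ) * (B.map (Complex.ofReal · : ℝ → ℂ))
        * ((u⁻¹ : (Matrix k k ℂ)ˣ) : Matrix k k ℂ) := by
    rw [← hf, ← hf B, _root_.map_mul, _root_.map_mul]; rfl
  rw [key, spectrum.units_conjugate]

set_option maxHeartbeats 1000000 in
open scoped MatrixOrder in
lemma spec_bound {k : Type*} [Fintype k] [DecidableEq k] [Nonempty k]
    (N₁₁ N₂₂ : Matrix k k ℝ) (hpd : N₁₁.PosDef) (h2psd : N₂₂.PosSemidef) :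
    0 ≤ specRad (N₁₁⁻¹ * N₂₂) ∧ ((specRad (N₁₁⁻¹ * N₂₂)) • N₁₁ - N₂₂).PosSemidef := by
  set r := specRad (N₁₁⁻¹ * N₂₂) with hrdef
  have hps := hpd.posSemidef
  set S₀ := CFC.sqrt N₁₁ with hSdef
  have hS₀herm : S₀.IsHermitian := (Matrix.nonneg_iff_posSemidef.mp (CFC.sqrt_nonneg N₁₁)).1
  have hmul : S₀ * S₀ = N₁₁ := CFC.sqrt_mul_sqrt_self N₁₁ hps.nonneg
  have hdet : IsUnit S₀.det := by
    rw [isUnit_iff_ne_zero]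
    intro h0
    have : N₁₁.det = 0 := by rw [← hmul, det_mul, h0, mul_zero]
    exact absurd this (ne_of_gt hpd.det_pos)
  set A := S₀⁻¹ * N₂₂ * S₀⁻¹ with hAdef
  have hApsd : A.PosSemidef := by
    have := h2psd.mul_mul_conjTranspose_same S₀⁻¹
    rwa [conjTranspose_nonsing_inv, hS₀herm.eq] at this
  have hsim : S₀ * (N₁₁⁻¹ * N₂₂) * S₀⁻¹ = A := by
    have hinv : N₁₁⁻¹ = S₀⁻¹ * S₀⁻¹ := by rw [← hmul, Matrix.mul_inv_rev]
    rw [hinv, hAdef]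
    simp only [← mul_assoc]
    rw [Matrix.mul_nonsing_inv _ hdet, one_mul]
  have hspecA : spectrum ℂ (A.map (Complex.ofReal · : ℝ → ℂ))
      = spectrum ℂ ((N₁₁⁻¹ * N₂₂).map (Complex.ofReal · : ℝ → ℂ)) := by
    rw [← hsim]; exact spectrum_map_conj S₀ _ hdet
  have heig : ∀ i, hApsd.1.eigenvalues i ≤ r := by
    intro i
    have hmem : ((hApsd.1.eigenvalues i : ℝ) : ℂ)
        ∈ spectrum ℂ ((N₁₁⁻¹ * N₂₂).map (Complex.ofReal · : ℝ → ℂ)) := by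
      rw [← hspecA]
      exact real_spectrum_map A (hApsd.1.eigenvalues_mem_spectrum_real i)
    have habs : ‖((hApsd.1.eigenvalues i : ℝ) : ℂ)‖ = hApsd.1.eigenvalues i := by
      rw [Complex.norm_of_nonneg (hApsd.eigenvalues_nonneg i)]
    have hbdd : BddAbove ((fun z : ℂ => ‖z‖) '' spectrum ℂ
        ((N₁₁⁻¹ * N₂₂).map (Complex.ofReal · : ℝ → ℂ))) :=
      (((N₁₁⁻¹ * N₂₂).map _).finite_spectrum.image _).bddAbove
    calc hApsd.1.eigenvalues i = ‖((hApsd.1.eigenvalues i : ℝ) : ℂ)‖ := habs.symm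
      _ ≤ r := le_csSup hbdd ⟨_, hmem, rfl⟩
  have i0 : k := Classical.arbitrary k
  have hr : 0 ≤ r := le_trans (hApsd.eigenvalues_nonneg i0) (heig i0)
  refine ⟨hr, ?_⟩
  set U : Matrix k k ℝ := (hApsd.1.eigenvectorUnitary : Matrix k k ℝ) with hUdef
  have hUU : U * star U = 1 := (Matrix.mem_unitaryGroup_iff).mp hApsd.1.eigenvectorUnitary.2
  have spec := hApsd.1.spectral_theorem; rw [Unitary.conjStarAlgAut_apply] at spec
  have hkey : r • (1 : Matrix k k ℝ) - A
      = U * (diagonal fun i => r - hApsd.1.eigenvalues i) * star U := by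
    have hD : (diagonal fun i => r - hApsd.1.eigenvalues i)
        = r • (1 : Matrix k k ℝ) - diagonal (RCLike.ofReal ∘ hApsd.1.eigenvalues) := by
      rw [RCLike.ofReal_real_eq_id]
      ext i j
      by_cases h : i = j <;>
        simp [diagonal, h, Matrix.one_apply, Matrix.sub_apply, Matrix.smul_apply]
    have hU1 : U * (r • (1 : Matrix k k ℝ)) * star U = r • (1 : Matrix k k ℝ) := by
      rw [mul_smul_comm, mul_one, smul_mul_assoc, hUU]
    rw [hD, Matrix.mul_sub, Matrix.sub_mul, hU1, ← spec]
  have hdiagpsd : (diagonal fun i => r - hApsd.1.eigenvalues i).PosSemidef :=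
    PosSemidef.diagonal (Pi.le_def.mpr fun i => sub_nonneg.mpr (heig i))
  have hDpsd : (r • (1 : Matrix k k ℝ) - A).PosSemidef := by
    rw [hkey, Matrix.star_eq_conjTranspose]
    exact hdiagpsd.mul_mul_conjTranspose_same U
  have e1 : S₀ * (r • (1 : Matrix k k ℝ)) * S₀ = r • N₁₁ := by
    rw [mul_smul_comm, mul_one, smul_mul_assoc, hmul]
  have e2 : S₀ * A * S₀ = N₂₂ := by
    rw [hAdef]
    simp only [← mul_assoc]
    rw [Matrix.mul_nonsing_inv _ hdet, one_mul, mul_assoc, Matrix.nonsing_inv_mul _ hdet,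
      mul_one]
  have hid : S₀ * (r • (1 : Matrix k k ℝ) - A) * S₀ᴴ = r • N₁₁ - N₂₂ := by
    rw [hS₀herm.eq, Matrix.mul_sub, Matrix.sub_mul, e1, e2]
  have := hDpsd.mul_mul_conjTranspose_same S₀
  rwa [hid] at this


lemma quad_aux {n : ℕ} {N₁₁ N₁₂ N₂₁ N₂₂ : Matrix (Fin n) (Fin n) ℝ}
    (hN : (fromBlocks N₁₁ N₁₂ N₂₁ N₂₂).PosSemidef) (a b : ℝ) (x : Fin n → ℝ) :
    0 ≤ a^2 * (x ⬝ᵥ N₁₁ *ᵥ x) + a*b*(x ⬝ᵥ N₁₂ *ᵥ x) + a*b*(x ⬝ᵥ N₂₁ *ᵥ x)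
      + b^2 * (x ⬝ᵥ N₂₂ *ᵥ x) := by
  have h := hN.dotProduct_mulVec_nonneg (Sum.elim (a • x) (b • x))
  simp only [star_trivial, fromBlocks_mulVec, sumElim_dotProduct_sumElim,
    Sum.elim_comp_inl, Sum.elim_comp_inr, mulVec_smul, dotProduct_add, dotProduct_smul,
    smul_dotProduct, smul_eq_mul] at h
  nlinarith [h]

set_option maxHeartbeats 1000000 in
/-- If the real symmetric `2n×2n` block matrix `N = [[N₁₁,N₁₂],[N₂₁,N₂₂]]`
is positive semi-definite, then `±(N₁₂+N₂₁) ⪯ w N₁₁ + (1/w) N₂₂` for every `w > 0`;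
and if moreover `N₁₁ ≻ 0`, then `±(N₁₂+N₂₁) ⪯ 2√(𝐫(N₁₁⁻¹N₂₂)) N₁₁`. -/
theorem block_psd_cross_term_bounds {n : ℕ}
    (N₁₁ N₁₂ N₂₁ N₂₂ : Matrix (Fin n) (Fin n) ℝ)
    (hN : (Matrix.fromBlocks N₁₁ N₁₂ N₂₁ N₂₂).PosSemidef) :
    (∀ w : ℝ, 0 < w →
        (w • N₁₁ + (1 / w) • N₂₂ - (N₁₂ + N₂₁)).PosSemidef ∧
        (w • N₁₁ + (1 / w) • N₂₂ + (N₁₂ + N₂₁)).PosSemidef)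
    ∧ (N₁₁.PosDef →
        ((2 * Real.sqrt (specRad (N₁₁⁻¹ * N₂₂))) • N₁₁ - (N₁₂ + N₂₁)).PosSemidef ∧
        ((2 * Real.sqrt (specRad (N₁₁⁻¹ * N₂₂))) • N₁₁ + (N₁₂ + N₂₁)).PosSemidef) := by
  have e : fromBlocks N₁₁ᴴ N₂₁ᴴ N₁₂ᴴ N₂₂ᴴ = fromBlocks N₁₁ N₁₂ N₂₁ N₂₂ := by
    rw [← fromBlocks_conjTranspose]; exact hN.1
  have h11 : N₁₁ᴴ = N₁₁ := by have := congrArg toBlocks₁₁ e; simpa using this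
  have h12 : N₂₁ᴴ = N₁₂ := by have := congrArg toBlocks₁₂ e; simpa using this
  have h21 : N₁₂ᴴ = N₂₁ := by have := congrArg toBlocks₂₁ e; simpa using this
  have h22 : N₂₂ᴴ = N₂₂ := by have := congrArg toBlocks₂₂ e; simpa using this
  have hermS : (N₁₂ + N₂₁)ᴴ = N₁₂ + N₂₁ := by rw [conjTranspose_add, h21, h12, add_comm]
  have h1nn : ∀ x : Fin n → ℝ, 0 ≤ x ⬝ᵥ N₁₁ *ᵥ x := fun x => by
    simpa using quad_aux hN 1 0 x
  have h2nn : ∀ x : Fin n → ℝ, 0 ≤ x ⬝ᵥ N₂₂ *ᵥ x := fun x => by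
    simpa using quad_aux hN 0 1 x
  have hbd : ∀ w : ℝ, 0 < w → ∀ x : Fin n → ℝ,
      x ⬝ᵥ N₁₂ *ᵥ x + x ⬝ᵥ N₂₁ *ᵥ x
        ≤ w * (x ⬝ᵥ N₁₁ *ᵥ x) + (1/w) * (x ⬝ᵥ N₂₂ *ᵥ x) ∧
      -(x ⬝ᵥ N₁₂ *ᵥ x + x ⬝ᵥ N₂₁ *ᵥ x)
        ≤ w * (x ⬝ᵥ N₁₁ *ᵥ x) + (1/w) * (x ⬝ᵥ N₂₂ *ᵥ x) := by
    intro w hw x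
    have hsw : 0 < Real.sqrt w := Real.sqrt_pos.mpr hw
    have e1 : (Real.sqrt w)^2 = w := Real.sq_sqrt hw.le
    have e2 : ((Real.sqrt w)⁻¹)^2 = 1/w := by
      rw [inv_pow, e1, one_div]
    have e3 : Real.sqrt w * (Real.sqrt w)⁻¹ = 1 := mul_inv_cancel₀ hsw.ne'
    have hq1 := quad_aux hN (Real.sqrt w) (-(Real.sqrt w)⁻¹) x
    have hq2 := quad_aux hN (Real.sqrt w) ((Real.sqrt w)⁻¹) x
    rw [neg_sq] at hq1
    rw [e1, e2, mul_neg, e3] at hq1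
    rw [e1, e2, e3] at hq2
    constructor <;> linarith
  have part1 : ∀ w : ℝ, 0 < w →
      (w • N₁₁ + (1 / w) • N₂₂ - (N₁₂ + N₂₁)).PosSemidef ∧
      (w • N₁₁ + (1 / w) • N₂₂ + (N₁₂ + N₂₁)).PosSemidef := by
    intro w hw
    have hermC : (w • N₁₁ + (1/w) • N₂₂)ᴴ = w • N₁₁ + (1/w) • N₂₂ := by
      rw [conjTranspose_add, conjTranspose_smul, conjTranspose_smul, h11, h22,
        star_trivial, star_trivial]
    constructor
    · refine .of_dotProduct_mulVec_nonneg (by rw [IsHermitian, conjTranspose_sub, hermC, hermS]) fun x => ?_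
      simp only [star_trivial, sub_mulVec, add_mulVec, smul_mulVec,
        dotProduct_sub, dotProduct_add, dotProduct_smul, smul_eq_mul]
      linarith [(hbd w hw x).1]
    · refine .of_dotProduct_mulVec_nonneg (by rw [IsHermitian, conjTranspose_add, hermC, hermS]) fun x => ?_
      simp only [star_trivial, sub_mulVec, add_mulVec, smul_mulVec,
        dotProduct_sub, dotProduct_add, dotProduct_smul, smul_eq_mul]
      linarith [(hbd w hw x).2]
  refine ⟨part1, ?_⟩
  intro hpd
  rcases Nat.eq_zero_or_pos n with hn | hn
  · subst hn
    have triv : ∀ M : Matrix (Fin 0) (Fin 0) ℝ, M.PosSemidef := fun M =>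
      .of_dotProduct_mulVec_nonneg (by ext i j; exact i.elim0) fun x => by simp [dotProduct]
    exact ⟨triv _, triv _⟩
  have : Nonempty (Fin n) := ⟨⟨0, hn⟩⟩
  have h2psd : N₂₂.PosSemidef := .of_dotProduct_mulVec_nonneg h22 fun x => by simpa using h2nn x
  obtain ⟨hr, hKpsd⟩ := spec_bound N₁₁ N₂₂ hpd h2psd
  set r := specRad (N₁₁⁻¹ * N₂₂) with hrdef
  have hq21 : ∀ x : Fin n → ℝ, x ⬝ᵥ N₂₂ *ᵥ x ≤ r * (x ⬝ᵥ N₁₁ *ᵥ x) := by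
    intro x
    have := hKpsd.dotProduct_mulVec_nonneg x
    simp only [star_trivial, sub_mulVec, smul_mulVec, dotProduct_sub, dotProduct_smul,
      smul_eq_mul] at this
    linarith
  have hfin : ∀ x : Fin n → ℝ,
      (x ⬝ᵥ N₁₂ *ᵥ x + x ⬝ᵥ N₂₁ *ᵥ x ≤ 2 * Real.sqrt r * (x ⬝ᵥ N₁₁ *ᵥ x)) ∧
      (-(x ⬝ᵥ N₁₂ *ᵥ x + x ⬝ᵥ N₂₁ *ᵥ x) ≤ 2 * Real.sqrt r * (x ⬝ᵥ N₁₁ *ᵥ x)) := by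
    intro x
    have hq1 : 0 ≤ x ⬝ᵥ N₁₁ *ᵥ x := h1nn x
    have key : ∀ s : ℝ,
        (∀ w : ℝ, 0 < w → s ≤ w * (x ⬝ᵥ N₁₁ *ᵥ x) + (1/w) * (x ⬝ᵥ N₂₂ *ᵥ x)) →
        s ≤ 2 * Real.sqrt r * (x ⬝ᵥ N₁₁ *ᵥ x) := by
      intro s hs
      rcases eq_or_lt_of_le hr with hr0 | hrpos
      · have hq2z : x ⬝ᵥ N₂₂ *ᵥ x = 0 := by
          have := hq21 x
          rw [← hr0] at this
          exact le_antisymm (by linarith) (h2nn x)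
        have hs0 : s ≤ 0 := by
          apply le_of_forall_pos_le_add
          intro ε hε
          have hwpos : 0 < ε / (x ⬝ᵥ N₁₁ *ᵥ x + 1) := by positivity
          have h10 := hs _ hwpos
          rw [hq2z, mul_zero, add_zero] at h10
          have h9 : ε / (x ⬝ᵥ N₁₁ *ᵥ x + 1) * (x ⬝ᵥ N₁₁ *ᵥ x) ≤ ε := by
            rw [div_mul_eq_mul_div, div_le_iff₀ (by positivity)]
            nlinarith
          linarith
        rw [← hr0, Real.sqrt_zero]
        linarith
      · have hsr : 0 < Real.sqrt r := Real.sqrt_pos.mpr hrpos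
        have hs' := hs _ hsr
        have h7 : (1/Real.sqrt r) * (x ⬝ᵥ N₂₂ *ᵥ x)
            ≤ (1/Real.sqrt r) * (r * (x ⬝ᵥ N₁₁ *ᵥ x)) :=
          mul_le_mul_of_nonneg_left (hq21 x) (by positivity)
        have h8 : (1/Real.sqrt r) * (r * (x ⬝ᵥ N₁₁ *ᵥ x))
            = Real.sqrt r * (x ⬝ᵥ N₁₁ *ᵥ x) := by
          field_simp
          nlinarith [Real.mul_self_sqrt hr]
        linarith
    exact ⟨key _ (fun w hw => (hbd w hw x).1), key _ (fun w hw => (hbd w hw x).2)⟩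
  constructor
  · refine .of_dotProduct_mulVec_nonneg (by rw [IsHermitian, conjTranspose_sub, conjTranspose_smul, h11, star_trivial,
      hermS]) fun x => ?_
    simp only [star_trivial, sub_mulVec, add_mulVec, smul_mulVec, dotProduct_sub,
      dotProduct_add, dotProduct_smul, smul_eq_mul]
    linarith [(hfin x).1]
  · refine .of_dotProduct_mulVec_nonneg (by rw [IsHermitian, conjTranspose_add, conjTranspose_smul, h11, star_trivial,
      hermS]) fun x => ?_
    simp only [star_trivial, sub_mulVec, add_mulVec, smul_mulVec, dotProduct_sub,
      dotProduct_add, dotProduct_smul, smul_eq_mul]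
    linarith [(hfin x).2]
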